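/- Let V be a finite-dimensional complex inner product space with Hermitian inner product h, linear in the first argument; regard V as a real vector space and let j denote multiplication by i. For a self-adjoint ℂ-linear endomorphism A of V let g_A(v,w) = Re h(Av,w), and for a real subspace X let X^{⊥,g_A} = {v ∈ V : g_A(v,x) = 0 for all x ∈ X}. Let 𝒥 be a unital Jordan operator system on V, i.e. an ℝ-linear subspace of the ℂ-linear endomorphisms of V all of whose members are self-adjoint, containing the identity, and with A ∘ A ∈ 𝒥 whenever A ∈ 𝒥. Let W be a real subspace of V and S := (jW)^{⊥,Re h}, and assume Im h(B s, s') = 0 for every B ∈ 𝒥 and all s, s' ∈ S. Let E ∈ 𝒥 be positive definite (h(Ev,v) > 0 for all v ≠ 0) and let A ∈ 𝒥 satisfy A ∘ E = E ∘ A. Then j(A(W^{⊥,g_E})) ⊆ W. -/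

import Mathlib

open ComplexOrder

variable {V : Type*} [NormedAddCommGroup V] [InnerProductSpace ℂ V] [FiniteDimensional ℂ V]

/-- Multiplication by `i` on `V`, seen as an ℝ-linear endomorphism `j`. -/
noncomputable def smulI : V →ₗ[ℝ] V where
  toFun v := Complex.I • v
  map_add' a b := smul_add _ a b
  map_smul' r v := by
    simp only [RingHom.id_apply]
    rw [smul_comm]

/-- A unital Jordan operator system on `V`: an ℝ-linear subspace of the ℂ-linear endomorphisms
of `V` all of whose members are self-adjoint, containing the identity, and closed under
squares. -/
structure IsJordanOperatorSystem (J : Set (V →ₗ[ℂ] V)) : Prop where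
  symm_mem : ∀ A ∈ J, LinearMap.IsSymmetric A
  id_mem : LinearMap.id ∈ J
  sq_mem : ∀ A ∈ J, A ∘ₗ A ∈ J
  add_mem : ∀ A ∈ J, ∀ B ∈ J, A + B ∈ J
  smul_mem : ∀ (r : ℝ), ∀ A ∈ J, r • A ∈ J

/-- The orthogonal complement `X^{⊥, g_B}` of a set of vectors `X` with respect to the real
bilinear form `g_B(v, w) = Re h(B v, w)`; in Mathlib's convention `h (B v) w = inner w (B v)`.
Note `g_{id} = Re h`. -/
noncomputable def gperp (B : V →ₗ[ℂ] V) (X : Set V) : Submodule ℝ V where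
  carrier := {v | ∀ x ∈ X, (inner ℂ x (B v) : ℂ).re = 0}
  zero_mem' := by intro x hx; simp
  add_mem' := by
    intro a b ha hb x hx
    simp only [map_add, inner_add_right, Complex.add_re, ha x hx, hb x hx, add_zero]
  smul_mem' := by
    intro r v hv x hx
    rw [LinearMap.map_smul_of_tower, ← Complex.coe_smul, inner_smul_right]
    simp [hv x hx]

set_option linter.unusedSectionVars false

-- auxiliary lemmas

lemma mem_gperp {B : V →ₗ[ℂ] V} {X : Set V} {v : V} :
    v ∈ gperp B X ↔ ∀ x ∈ X, (inner ℂ x (B v) : ℂ).re = 0 := Iff.rfl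

lemma J_zero_mem {J : Set (V →ₗ[ℂ] V)} (hJ : IsJordanOperatorSystem J) :
    (0 : V →ₗ[ℂ] V) ∈ J := by
  have := hJ.smul_mem 0 _ hJ.id_mem
  simpa using this

lemma J_mul_mem {J : Set (V →ₗ[ℂ] V)} (hJ : IsJordanOperatorSystem J)
    {B C : V →ₗ[ℂ] V} (hB : B ∈ J) (hC : C ∈ J)
    (h : ∀ v, B (C v) = C (B v)) : B ∘ₗ C ∈ J := by
  have key : B ∘ₗ C =
      ((1:ℝ)/2) • ((B + C) ∘ₗ (B + C) + ((-1:ℝ) • (B ∘ₗ B) + (-1:ℝ) • (C ∘ₗ C))) := by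
    ext v
    simp only [LinearMap.comp_apply, LinearMap.smul_apply, LinearMap.add_apply, map_add, h v]
    module
  rw [key]
  exact hJ.smul_mem _ _ (hJ.add_mem _ (hJ.sq_mem _ (hJ.add_mem _ hB _ hC)) _
    (hJ.add_mem _ (hJ.smul_mem _ _ (hJ.sq_mem _ hB)) _ (hJ.smul_mem _ _ (hJ.sq_mem _ hC))))

lemma J_sum_mem {J : Set (V →ₗ[ℂ] V)} (hJ : IsJordanOperatorSystem J)
    {ι : Type*} (s : Finset ι) (f : ι → (V →ₗ[ℂ] V)) (hf : ∀ i ∈ s, f i ∈ J) :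
    ∑ i ∈ s, f i ∈ J :=
  Finset.sum_induction f (· ∈ J) (fun a b ha hb => hJ.add_mem a ha b hb) (J_zero_mem hJ) hf

lemma J_pow_mem {J : Set (V →ₗ[ℂ] V)} (hJ : IsJordanOperatorSystem J)
    {A E : V →ₗ[ℂ] V} (hA : A ∈ J) (hE : E ∈ J)
    (hc : ∀ v, A (E v) = E (A v)) (i : ℕ) : A ∘ₗ E ^ i ∈ J := by
  suffices H : ∀ i : ℕ, A ∘ₗ E ^ i ∈ J ∧ (∀ v, (A ∘ₗ E ^ i) (E v) = E ((A ∘ₗ E ^ i) v)) from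
    (H i).1
  intro i
  induction i with
  | zero =>
    constructor
    · simpa [pow_zero, Module.End.one_eq_id] using hA
    · intro v; simpa using hc v
  | succ n ih =>
    have hstep : A ∘ₗ E ^ (n + 1) = (A ∘ₗ E ^ n) ∘ₗ E := by
      ext v; simp [pow_succ, Module.End.mul_apply]
    constructor
    · rw [hstep]
      exact J_mul_mem hJ ih.1 hE (fun v => ih.2 v)
    · intro v
      have h1 : (A ∘ₗ E ^ (n + 1)) (E v) = (A ∘ₗ E ^ n) (E (E v)) := by
        rw [hstep]; rfl
      have h2 : (A ∘ₗ E ^ (n + 1)) v = (A ∘ₗ E ^ n) (E v) := by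
        rw [hstep]; rfl
      rw [h1, h2, ih.2 (E v)]


/-- core of the proof of Theorem 6.5 of the paper, operator form: with
`S = (jW)^{⊥, Re h}` and `Im h(B s, s') = 0` for every `B ∈ 𝒥` and all `s, s' ∈ S`, if
`E ∈ 𝒥` is positive definite (`h(E v, v) = inner v (E v) > 0` for `v ≠ 0`, complex order)
and `A ∈ 𝒥` commutes with `E`, then `j (A (W^{⊥, g_E})) ⊆ W`. -/
theorem stmt9 (J : Set (V →ₗ[ℂ] V)) (hJ : IsJordanOperatorSystem J)
    (W : Submodule ℝ V)
    (hS : ∀ B ∈ J, ∀ s ∈ gperp LinearMap.id ((W.map smulI : Submodule ℝ V) : Set V),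
      ∀ s' ∈ gperp LinearMap.id ((W.map smulI : Submodule ℝ V) : Set V),
        (inner ℂ s' (B s) : ℂ).im = 0)
    (E : V →ₗ[ℂ] V) (hE : E ∈ J)
    (hEpos : ∀ v : V, v ≠ 0 → 0 < (inner ℂ v (E v) : ℂ))
    (A : V →ₗ[ℂ] V) (hA : A ∈ J)
    (hcomm : A ∘ₗ E = E ∘ₗ A)
    (v : V) (hv : v ∈ gperp E (W : Set V)) :
    Complex.I • (A v) ∈ W := by
  letI : InnerProductSpace ℝ V := InnerProductSpace.complexToReal
  have hre : ∀ u w : V, (inner ℝ u w : ℝ) = (inner ℂ u w : ℂ).re := fun _ _ => rfl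
  -- the commutation, pointwise
  have hc : ∀ u, A (E u) = E (A u) := fun u => LinearMap.ext_iff.mp hcomm u
  -- E is injective
  have Einj : Function.Injective E := by
    intro a b hab
    by_contra hne
    have h0 : a - b ≠ 0 := sub_ne_zero.mpr hne
    have := hEpos (a - b) h0
    rw [map_sub, hab, sub_self, inner_zero_right] at this
    exact lt_irrefl 0 this
  -- characteristic polynomial of E over ℝ
  set Eℝ : V →ₗ[ℝ] V := E.restrictScalars ℝ with hEℝ
  set χ : Polynomial ℝ := Eℝ.charpoly with hχ
  have hpowEq : ∀ (i : ℕ) (u : V), (Eℝ ^ i) u = (E ^ i) u := by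
    intro i
    induction i with
    | zero => intro u; simp
    | succ n ih =>
      intro u
      rw [pow_succ, pow_succ, Module.End.mul_apply, Module.End.mul_apply, ih]
      rfl
  have hcoeff0 : χ.coeff 0 ≠ 0 := by
    intro h0
    have hdet : LinearMap.det Eℝ = 0 := by
      rw [LinearMap.det_eq_sign_charpoly_coeff, h0, mul_zero]
    have hker := LinearMap.bot_lt_ker_of_det_eq_zero hdet
    have hkerbot : LinearMap.ker Eℝ = ⊥ := LinearMap.ker_eq_bot.mpr (by exact Einj)
    rw [hkerbot] at hker
    exact lt_irrefl _ hker
  -- Cayley–Hamilton, pointwise over ℂ-linear powers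
  have hCH : ∀ u : V,
      ∑ i ∈ Finset.range (χ.natDegree + 1), χ.coeff i • (E ^ i) u = 0 := by
    intro u
    have h1 : Polynomial.aeval Eℝ χ = 0 := LinearMap.aeval_self_charpoly Eℝ
    rw [Polynomial.aeval_eq_sum_range] at h1
    have h2 := LinearMap.ext_iff.mp h1 u
    simpa [LinearMap.sum_apply, LinearMap.smul_apply, hpowEq] using h2
  -- the inverse-transporting operator C = A ∘ E⁻¹ as real polynomial combination
  set c0 : ℝ := χ.coeff 0 with hc0
  set C : V →ₗ[ℂ] V :=
    ∑ i ∈ Finset.range χ.natDegree, (-(c0⁻¹) * χ.coeff (i + 1)) • (A ∘ₗ E ^ i) with hC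
  have hCJ : C ∈ J := by
    apply J_sum_mem hJ
    intro i _
    exact hJ.smul_mem _ _ (J_pow_mem hJ hA hE hc i)
  have hCE : ∀ u : V, C (E u) = A u := by
    intro u
    have hsum : ∑ i ∈ Finset.range χ.natDegree, χ.coeff (i + 1) • (E ^ (i + 1)) u
        = -(c0 • u) := by
      have := hCH u
      rw [Finset.sum_range_succ'] at this
      simp only [pow_zero, Module.End.one_apply] at this
      linear_combination (norm := module) this
    have hCEu : C (E u)
        = A (∑ i ∈ Finset.range χ.natDegree, (-(c0⁻¹) * χ.coeff (i + 1)) • (E ^ (i + 1)) u) := by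
      rw [hC, LinearMap.sum_apply, map_sum]
      refine Finset.sum_congr rfl fun i _ => ?_
      simp [pow_succ, Module.End.mul_apply, LinearMap.map_smul_of_tower]
    have harg : ∑ i ∈ Finset.range χ.natDegree, (-(c0⁻¹) * χ.coeff (i + 1)) • (E ^ (i + 1)) u
        = u := by
      have h1 : ∑ i ∈ Finset.range χ.natDegree, (-(c0⁻¹) * χ.coeff (i + 1)) • (E ^ (i + 1)) u
          = (-(c0⁻¹)) • ∑ i ∈ Finset.range χ.natDegree, χ.coeff (i + 1) • (E ^ (i + 1)) u := by
        rw [Finset.smul_sum]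
        exact Finset.sum_congr rfl fun i _ => (mul_smul _ _ _)
      rw [h1, hsum, neg_smul, smul_neg, neg_neg, smul_smul, inv_mul_cancel₀ hcoeff0, one_smul]
    rw [hCEu, harg]
  -- the subspaces
  set K : Submodule ℝ V := W.map smulI with hK
  set S : Submodule ℝ V := gperp LinearMap.id (K : Set V) with hSdef
  have hSK : S = Kᗮ := by
    ext u
    rw [Submodule.mem_orthogonal]
    constructor
    · intro h x hx; rw [hre]; exact h x hx
    · intro h x hx
      have := h x hx
      rw [hre] at this
      simpa using this
  -- s0 ∈ S with E v = I • s0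
  set s0 : V := (-Complex.I) • (E v) with hs0
  have hs0S : s0 ∈ S := by
    intro x hx
    obtain ⟨w, hw, rfl⟩ := hx
    have hxw : smulI w = Complex.I • w := rfl
    rw [hxw, hs0]
    simp only [LinearMap.id_coe, id_eq]
    rw [inner_smul_left, inner_smul_right]
    have hvw : (inner ℂ w (E v) : ℂ).re = 0 := hv w hw
    rw [Complex.conj_I]
    have : (-Complex.I) * ((-Complex.I) * (inner ℂ w (E v) : ℂ)) = -(inner ℂ w (E v) : ℂ) := by
      ring_nf
      rw [Complex.I_sq]
      ring
    rw [this]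
    simp [hvw]
  have hEv : E v = Complex.I • s0 := by
    rw [hs0, smul_smul]
    simp [Complex.I_mul_I]
  -- A v = I • C s0
  have hAv : A v = Complex.I • (C s0) := by
    rw [← hCE v, hEv, map_smul]
  -- A v ∈ Sᗮ = K
  have hAvK : A v ∈ K := by
    have horth : A v ∈ Sᗮ := by
      rw [Submodule.mem_orthogonal]
      intro s hs
      rw [hre, hAv, inner_smul_right]
      have him : (inner ℂ s (C s0) : ℂ).im = 0 := hS C hCJ s0 hs0S s hs
      simp [Complex.mul_re, him]
    rw [hSK, Submodule.orthogonal_orthogonal] at horth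
    exact horth
  obtain ⟨w, hw, hweq⟩ := hAvK
  have hweq' : Complex.I • w = A v := hweq
  rw [← hweq', smul_smul, Complex.I_mul_I, neg_one_smul]
  exact W.neg_mem hw
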